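/- arXiv:1701.01340 — 4 statements merged into one kernel-verified Lean document; each statement's English description precedes it below -/
import Mathlib

section
/- Let X = (X_1,…,X_d) be a random vector with joint distribution function F_X(t) = exp(−(Σ_{i=1}^d σ_i^{η/α} t_i^{−1/α})^{α/η}) for t ∈ (0,∞)^d (the logistic model). Then X satisfies conditions (i) and (ii), and for any partition of I = {1,…,d} into nonempty blocks I_1,…,I_p: ε(1,…,1) = d^{α/η} and ε_{I_j}(1) = |I_j|^{α/η} for every j. -/
open MeasureTheory ProbabilityTheory Real Filter Topology
open scoped ProbabilityTheory

noncomputable section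

/-- Marginal Fréchet-type distribution function `F_i(t) = exp(-σ t^(-1/η))` for `t > 0`. -/
def margF (σ η t : ℝ) : ℝ := if 0 < t then Real.exp (-σ * t ^ (-1 / η)) else 0

/-- Joint distribution function of the random vector `X`. -/
def jointF {Ω : Type*} [MeasureSpace Ω] {d : ℕ} (X : Fin d → Ω → ℝ) (t : Fin d → ℝ) : ℝ :=
  (ℙ {ω | ∀ i, X i ω ≤ t i}).toReal

/-- Exponent function `ℓ(t) = -ln F_X(t)`. -/
def expo {Ω : Type*} [MeasureSpace Ω] {d : ℕ} (X : Fin d → Ω → ℝ) (t : Fin d → ℝ) : ℝ :=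
  -Real.log (jointF X t)

/-- Block maximum `M(I_j) = max_{i ∈ I_j} F_i(X_i)`, where `I_j = {i | B i = j}`. -/
def blockMax {Ω : Type*} [MeasureSpace Ω] {d p : ℕ} (B : Fin d → Fin p) (σ : Fin d → ℝ)
    (η : ℝ) (X : Fin d → Ω → ℝ) (j : Fin p) (ω : Ω) : ℝ :=
  sSup ((fun i => margF (σ i) η (X i ω)) '' {i | B i = j})

/-- Extremal dependence function
`ε(λ₁,…,λ_p) = E(max_j M(I_j)^(λ_j)) / (1 - E(max_j M(I_j)^(λ_j)))`. -/
def epsFun {Ω : Type*} [MeasureSpace Ω] {d p : ℕ} (B : Fin d → Fin p) (σ : Fin d → ℝ)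
    (η : ℝ) (X : Fin d → Ω → ℝ) (l : Fin p → ℝ) : ℝ :=
  (∫ ω, ⨆ j, blockMax B σ η X j ω ^ l j ∂ℙ) /
    (1 - ∫ ω, ⨆ j, blockMax B σ η X j ω ^ l j ∂ℙ)

/-- Single-block extremal dependence function `ε_{I_j}(λ)`. -/
def epsBlock {Ω : Type*} [MeasureSpace Ω] {d p : ℕ} (B : Fin d → Fin p) (σ : Fin d → ℝ)
    (η : ℝ) (X : Fin d → Ω → ℝ) (j : Fin p) (l : ℝ) : ℝ :=
  (∫ ω, blockMax B σ η X j ω ^ l ∂ℙ) / (1 - ∫ ω, blockMax B σ η X j ω ^ l ∂ℙ)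

/-! ### Auxiliary lemmas -/

lemma margF_nonneg (σ η t : ℝ) : 0 ≤ margF σ η t := by
  unfold margF; split
  · positivity
  · exact le_rfl

lemma margF_lt_one {σ η : ℝ} (hσ : 0 < σ) (t : ℝ) : margF σ η t < 1 := by
  unfold margF; split
  · rename_i ht
    have h1 : 0 < t ^ (-1 / η) := Real.rpow_pos_of_pos ht _
    have h2 : -σ * t ^ (-1 / η) < 0 := by nlinarith
    have := Real.exp_lt_exp.mpr h2
    simpa using this
  · norm_num

lemma measurable_margF (σ η : ℝ) : Measurable (margF σ η) := by
  unfold margF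
  refine Measurable.ite ?_ ?_ measurable_const
  · exact measurableSet_Ioi
  · measurability

lemma margF_le_iff {σ η u : ℝ} (hσ : 0 < σ) (hη : 0 < η) (hu0 : 0 < u) (hu1 : u < 1) (t : ℝ) :
    margF σ η t ≤ u ↔ t ≤ (σ / (-Real.log u)) ^ η := by
  have hs : 0 < -Real.log u := by have := Real.log_neg hu0 hu1; linarith
  have hT : 0 < (σ / (-Real.log u)) ^ η := Real.rpow_pos_of_pos (div_pos hσ hs) _
  unfold margF
  split
  · rename_i ht
    rw [← Real.le_log_iff_exp_le hu0]
    have step1 : -σ * t ^ (-1 / η) ≤ Real.log u ↔ (-Real.log u) / σ ≤ t ^ (-1 / η) := by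
      rw [div_le_iff₀ hσ]
      constructor <;> intro h <;> nlinarith
    rw [step1]
    have hexp : (-1 : ℝ) / η = (-η)⁻¹ := by
      field_simp
    rw [hexp, Real.le_rpow_inv_iff_of_neg (div_pos hs hσ) ht (neg_lt_zero.mpr hη)]
    have : ((-Real.log u) / σ) ^ (-η) = (σ / (-Real.log u)) ^ η := by
      rw [Real.rpow_neg (div_pos hs hσ).le, ← Real.inv_rpow (div_pos hs hσ).le, inv_div]
    rw [this]
  · rename_i ht
    constructor
    · intro _
      push_neg at ht
      exact ht.trans hT.le
    · intro _
      exact hu0.le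

/-- Joint c.d.f. restricted to a subset of coordinates. -/
lemma prob_le_subset
    {Ω : Type*} [MeasureSpace Ω] [IsProbabilityMeasure (ℙ : Measure Ω)] {d : ℕ} (hd : 0 < d)
    (X : Fin d → Ω → ℝ) (σ : Fin d → ℝ) (hσ : ∀ i, 0 < σ i)
    (α η : ℝ) (hα : 0 < α) (hη : 0 < η)
    (hjoint : ∀ t : Fin d → ℝ, (∀ i, 0 < t i) →
      ℙ {ω | ∀ i, X i ω ≤ t i} =
        ENNReal.ofReal (Real.exp (-((∑ i, σ i ^ (η / α) * t i ^ (-1 / α)) ^ (α / η)))))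
    (S : Finset (Fin d)) (t : Fin d → ℝ) (ht : ∀ i ∈ S, 0 < t i) :
    ℙ {ω | ∀ i ∈ S, X i ω ≤ t i} =
      ENNReal.ofReal
        (Real.exp (-((∑ i ∈ S, σ i ^ (η / α) * t i ^ (-1 / α)) ^ (α / η)))) := by
  haveI : Nonempty (Fin d) := Fin.pos_iff_nonempty.mp hd
  set u : ℕ → Fin d → ℝ := fun n i => if i ∈ S then t i else (n : ℝ) + 1 with hu
  have hupos : ∀ n i, 0 < u n i := by
    intro n i
    simp only [hu]; split
    · exact ht i ‹_›
    · positivity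
  have hmono : Monotone fun n => {ω : Ω | ∀ i, X i ω ≤ u n i} := by
    intro m n hmn ω hω i
    refine (hω i).trans ?_
    simp only [hu]; split
    · exact le_rfl
    · have : (m : ℝ) ≤ n := Nat.cast_le.mpr hmn
      linarith
  have hunion : (⋃ n, {ω : Ω | ∀ i, X i ω ≤ u n i}) = {ω | ∀ i ∈ S, X i ω ≤ t i} := by
    ext ω
    simp only [Set.mem_iUnion, Set.mem_setOf_eq]
    constructor
    · rintro ⟨n, hn⟩ i hi
      have h := hn i
      simpa only [hu, if_pos hi] using h
    · intro h
      obtain ⟨n, hn⟩ :=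
        exists_nat_ge (Finset.univ.sup' Finset.univ_nonempty fun i => X i ω)
      refine ⟨n, fun i => ?_⟩
      simp only [hu]; split
      · exact h i ‹_›
      · have h1 : X i ω ≤ Finset.univ.sup' Finset.univ_nonempty fun i => X i ω :=
          Finset.le_sup' (fun i => X i ω) (Finset.mem_univ i)
        have h2 := h1.trans hn
        linarith
  have hαη : 0 < α / η := div_pos hα hη
  have hL : 0 ≤ ∑ i ∈ S, σ i ^ (η / α) * t i ^ (-1 / α) :=
    Finset.sum_nonneg fun i hi => by
      have := hσ i; have := ht i hi; positivity
  have hPn : ∀ n : ℕ, ℙ {ω : Ω | ∀ i, X i ω ≤ u n i}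
      = ENNReal.ofReal (Real.exp (-(((∑ i ∈ S, σ i ^ (η / α) * t i ^ (-1 / α)) +
          (∑ i ∈ Sᶜ, σ i ^ (η / α)) * ((n : ℝ) + 1) ^ (-1 / α)) ^ (α / η)))) := by
    intro n
    rw [hjoint (u n) (hupos n)]
    have hsum : (∑ i, σ i ^ (η / α) * u n i ^ (-1 / α))
        = (∑ i ∈ S, σ i ^ (η / α) * t i ^ (-1 / α)) +
          (∑ i ∈ Sᶜ, σ i ^ (η / α)) * ((n : ℝ) + 1) ^ (-1 / α) := by
      rw [← Finset.sum_add_sum_compl S, Finset.sum_mul]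
      congr 1
      · refine Finset.sum_congr rfl fun i hi => ?_
        simp only [hu]; rw [if_pos hi]
      · refine Finset.sum_congr rfl fun i hi => ?_
        simp only [hu]; rw [if_neg (Finset.mem_compl.mp hi)]
    rw [hsum]
  have h1 : Tendsto (fun n : ℕ => ((n : ℝ) + 1)) atTop atTop :=
    tendsto_atTop_add_const_right _ _ tendsto_natCast_atTop_atTop
  have h2 : Tendsto (fun x : ℝ => x ^ (-1 / α)) atTop (𝓝 0) := by
    rw [neg_div]
    exact tendsto_rpow_neg_atTop (by positivity)
  have h3 : Tendsto (fun n : ℕ => (∑ i ∈ S, σ i ^ (η / α) * t i ^ (-1 / α)) +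
      (∑ i ∈ Sᶜ, σ i ^ (η / α)) * ((n : ℝ) + 1) ^ (-1 / α)) atTop
      (𝓝 (∑ i ∈ S, σ i ^ (η / α) * t i ^ (-1 / α))) := by
    have h6 := ((h2.comp h1).const_mul (∑ i ∈ Sᶜ, σ i ^ (η / α))).const_add
      (∑ i ∈ S, σ i ^ (η / α) * t i ^ (-1 / α))
    simpa using h6
  have hcont : ContinuousAt (fun x : ℝ => ENNReal.ofReal (Real.exp (-(x ^ (α / η)))))
      (∑ i ∈ S, σ i ^ (η / α) * t i ^ (-1 / α)) := by
    refine ENNReal.continuous_ofReal.continuousAt.comp ?_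
    refine Real.continuous_exp.continuousAt.comp ?_
    exact (Real.continuousAt_rpow_const _ (α / η) (Or.inr hαη.le)).neg
  have hfin := hcont.tendsto.comp h3
  have hmeas := tendsto_measure_iUnion_atTop (μ := (ℙ : Measure Ω)) hmono
  rw [hunion] at hmeas
  refine tendsto_nhds_unique hmeas ?_
  exact hfin.congr fun n => (hPn n).symm

/-- The expectation of the maximum of the transformed coordinates over a subset. -/
lemma integral_sup'_eq
    {Ω : Type*} [MeasureSpace Ω] [IsProbabilityMeasure (ℙ : Measure Ω)] {d : ℕ} (hd : 0 < d)
    (X : Fin d → Ω → ℝ) (hX : ∀ i, Measurable (X i))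
    (σ : Fin d → ℝ) (hσ : ∀ i, 0 < σ i)
    (α η : ℝ) (hα : 0 < α) (hη : 0 < η)
    (hjoint : ∀ t : Fin d → ℝ, (∀ i, 0 < t i) →
      ℙ {ω | ∀ i, X i ω ≤ t i} =
        ENNReal.ofReal (Real.exp (-((∑ i, σ i ^ (η / α) * t i ^ (-1 / α)) ^ (α / η)))))
    (S : Finset (Fin d)) (hS : S.Nonempty) :
    ∫ ω, S.sup' hS (fun i => margF (σ i) η (X i ω)) ∂ℙ
      = (S.card : ℝ) ^ (α / η) / ((S.card : ℝ) ^ (α / η) + 1) := by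
  set c : ℝ := (S.card : ℝ) ^ (α / η) with hc
  have hcard : (0 : ℝ) < S.card := by exact_mod_cast Finset.card_pos.mpr hS
  have hcpos : 0 < c := Real.rpow_pos_of_pos hcard _
  set M : Ω → ℝ := fun ω => S.sup' hS (fun i => margF (σ i) η (X i ω)) with hM
  have hMmeas : Measurable M := by
    have h := Finset.measurable_sup' hS
      (f := fun i ω => margF (σ i) η (X i ω))
      (fun i _ => (measurable_margF (σ i) η).comp (hX i))
    have heq : M = S.sup' hS fun i ω => margF (σ i) η (X i ω) := by
      funext ω
      rw [hM, Finset.sup'_apply]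
    rw [heq]
    exact h
  have hM0 : ∀ ω, 0 ≤ M ω := fun ω =>
    le_trans (margF_nonneg _ _ _)
      (Finset.le_sup' (fun i => margF (σ i) η (X i ω)) hS.choose_spec)
  have hM1 : ∀ ω, M ω < 1 := fun ω =>
    (Finset.sup'_lt_iff hS).mpr fun i _ => margF_lt_one (hσ i) _
  have hdist : ∀ u : ℝ, 0 < u → u < 1 →
      ℙ {ω | u < M ω} = ENNReal.ofReal (1 - u ^ c) := by
    intro u hu0 hu1
    have hs : 0 < -Real.log u := by have := Real.log_neg hu0 hu1; linarith
    have hle : {ω | M ω ≤ u} =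
        {ω | ∀ i ∈ S, X i ω ≤ (fun i => (σ i / (-Real.log u)) ^ η) i} := by
      ext ω
      simp only [Set.mem_setOf_eq, hM, Finset.sup'_le_iff]
      exact forall₂_congr fun i _ => margF_le_iff (hσ i) hη hu0 hu1 _
    have hPle : ℙ {ω | M ω ≤ u} = ENNReal.ofReal (u ^ c) := by
      rw [hle, prob_le_subset hd X σ hσ α η hα hη hjoint S _
        (fun i _ => Real.rpow_pos_of_pos (div_pos (hσ i) hs) _)]
      congr 2
      have hterm : ∀ i ∈ S,
          σ i ^ (η / α) * ((σ i / (-Real.log u)) ^ η) ^ (-1 / α)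
            = (-Real.log u) ^ (η / α) := by
        intro i _
        have hdiv : (0 : ℝ) ≤ σ i / (-Real.log u) := (div_pos (hσ i) hs).le
        rw [← Real.rpow_mul hdiv]
        have he : η * (-1 / α) = -(η / α) := by ring
        rw [he, Real.rpow_neg hdiv, ← Real.inv_rpow hdiv, inv_div,
          Real.div_rpow hs.le (hσ i).le]
        rw [mul_comm, div_mul_cancel₀]
        exact (Real.rpow_pos_of_pos (hσ i) _).ne'
      rw [Finset.sum_congr rfl hterm, Finset.sum_const, nsmul_eq_mul,
        Real.mul_rpow hcard.le (Real.rpow_nonneg hs.le _), ← Real.rpow_mul hs.le]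
      have h1 : η / α * (α / η) = 1 := by
        field_simp
      rw [h1, Real.rpow_one, ← hc, Real.rpow_def_of_pos hu0]
      congr 1
      ring
    have hcompl : {ω | u < M ω} = {ω | M ω ≤ u}ᶜ := by
      ext ω; simp [not_le]
    have hmeasset : MeasurableSet {ω | M ω ≤ u} := hMmeas measurableSet_Iic
    rw [hcompl, measure_compl hmeasset (measure_ne_top _ _), measure_univ, hPle,
      ← ENNReal.ofReal_one, ← ENNReal.ofReal_sub _ (Real.rpow_nonneg hu0.le _)]
  have hint : Integrable M ℙ := by
    refine (integrable_const (1 : ℝ)).mono' hMmeas.aestronglyMeasurable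
      (ae_of_all _ fun ω => ?_)
    rw [Real.norm_eq_abs, abs_of_nonneg (hM0 ω)]
    exact (hM1 ω).le
  rw [hint.integral_eq_integral_meas_lt (ae_of_all _ hM0)]
  have hzero : ∀ t : ℝ, 1 ≤ t → ℙ {ω | t < M ω} = 0 := by
    intro t htt
    have : {ω | t < M ω} = ∅ := by
      ext ω
      simp only [Set.mem_setOf_eq, Set.mem_empty_iff_false, iff_false, not_lt]
      exact (hM1 ω).le.trans htt
    rw [this, measure_empty]
  have hEq : Set.EqOn (fun t : ℝ => (ℙ {ω | t < M ω}).toReal)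
      (fun t : ℝ => 1 - t ^ c) (Set.Ioc 0 1) := by
    intro t htI
    rcases eq_or_lt_of_le htI.2 with h1 | h1
    · simp only
      rw [h1, hzero 1 le_rfl, Real.one_rpow]
      simp
    · simp only
      rw [hdist t htI.1 h1, ENNReal.toReal_ofReal]
      have : t ^ c ≤ 1 := Real.rpow_le_one htI.1.le h1.le hcpos.le
      linarith
  have hintOn1 : IntegrableOn (fun t : ℝ => 1 - t ^ c) (Set.Ioc (0:ℝ) 1) := by
    rw [← intervalIntegrable_iff_integrableOn_Ioc_of_le zero_le_one]
    exact intervalIntegrable_const.sub (intervalIntegral.intervalIntegrable_rpow' (by linarith))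
  have hintOnG1 : IntegrableOn (fun t : ℝ => (ℙ {ω | t < M ω}).toReal) (Set.Ioc (0:ℝ) 1) :=
    hintOn1.congr_fun hEq.symm measurableSet_Ioc
  have hEq2 : Set.EqOn (fun t : ℝ => (ℙ {ω | t < M ω}).toReal)
      (fun _ : ℝ => (0 : ℝ)) (Set.Ioi 1) := by
    intro t htI
    simp only
    rw [hzero t (le_of_lt htI)]
    simp
  have hintOnG2 : IntegrableOn (fun t : ℝ => (ℙ {ω | t < M ω}).toReal) (Set.Ioi (1:ℝ)) :=
    (integrableOn_zero).congr_fun hEq2.symm measurableSet_Ioi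
  change ∫ t in Set.Ioi (0:ℝ), (ℙ {ω | t < M ω}).toReal = c / (c + 1)
  rw [← Set.Ioc_union_Ioi_eq_Ioi (zero_le_one (α := ℝ)),
    setIntegral_union (Set.Ioc_disjoint_Ioi le_rfl) measurableSet_Ioi hintOnG1 hintOnG2,
    setIntegral_congr_fun measurableSet_Ioi hEq2, integral_zero, add_zero,
    setIntegral_congr_fun measurableSet_Ioc hEq,
    ← intervalIntegral.integral_of_le zero_le_one,
    intervalIntegral.integral_sub intervalIntegrable_const
      (intervalIntegral.intervalIntegrable_rpow' (by linarith)),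
    intervalIntegral.integral_const, integral_rpow (Or.inl (by linarith))]
  rw [Real.one_rpow, Real.zero_rpow (by positivity : c + 1 ≠ 0)]
  have hc1 : c + 1 ≠ 0 := by positivity
  field_simp
  simp only [sub_zero, smul_eq_mul, mul_one]
  ring

theorem statement13
    {Ω : Type*} [MeasureSpace Ω] [IsProbabilityMeasure (ℙ : Measure Ω)]
    {d p : ℕ} (hd : 0 < d) (hp : 0 < p)
    (X : Fin d → Ω → ℝ) (hX : ∀ i, Measurable (X i))
    (σ : Fin d → ℝ) (hσ : ∀ i, 0 < σ i)
    (α η : ℝ) (hα : 0 < α) (hαη : α ≤ η) (hη1 : η ≤ 1)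
    (hjoint : ∀ t : Fin d → ℝ, (∀ i, 0 < t i) →
      ℙ {ω | ∀ i, X i ω ≤ t i} =
        ENNReal.ofReal (Real.exp (-((∑ i, σ i ^ (η / α) * t i ^ (-1 / α)) ^ (α / η)))))
    (B : Fin d → Fin p) (hB : Function.Surjective B) :
    ((∀ i, ∀ t : ℝ, 0 < t →
        ℙ {ω | X i ω ≤ t} = ENNReal.ofReal (Real.exp (-σ i * t ^ (-1 / η)))) ∧
      (∀ t : Fin d → ℝ, (∀ i, 0 < t i) → 0 < jointF X t) ∧
      (∀ c : ℝ, 0 < c → ∀ t : Fin d → ℝ, (∀ i, 0 < t i) →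
        expo X (fun i => c * t i) = c ^ (-1 / η) * expo X t)) ∧
    epsFun B σ η X (fun _ => 1) = (d : ℝ) ^ (α / η) ∧
    ∀ j, epsBlock B σ η X j 1 =
      ((Finset.univ.filter fun i => B i = j).card : ℝ) ^ (α / η) := by
  have hη : 0 < η := lt_of_lt_of_le hα hαη
  haveI : Nonempty (Fin d) := Fin.pos_iff_nonempty.mp hd
  haveI : Nonempty (Fin p) := Fin.pos_iff_nonempty.mp hp
  -- block nonemptiness
  have hBj : ∀ j : Fin p, (Finset.univ.filter fun i => B i = j).Nonempty := by
    intro j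
    obtain ⟨i, hi⟩ := hB j
    exact ⟨i, Finset.mem_filter.mpr ⟨Finset.mem_univ i, hi⟩⟩
  -- identification of blockMax with a Finset.sup'
  have hbm : ∀ (j : Fin p) (ω : Ω), blockMax B σ η X j ω =
      (Finset.univ.filter fun i => B i = j).sup' (hBj j)
        (fun i => margF (σ i) η (X i ω)) := by
    intro j ω
    have hset : ((Finset.univ.filter fun i => B i = j : Finset (Fin d)) : Set (Fin d))
        = {i | B i = j} := by
      ext i; simp
    rw [Finset.sup'_eq_csSup_image, hset]
    rfl
  -- the total sup
  have hsup : ∀ ω : Ω, (⨆ j, blockMax B σ η X j ω)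
      = Finset.univ.sup' Finset.univ_nonempty (fun i => margF (σ i) η (X i ω)) := by
    intro ω
    apply le_antisymm
    · refine ciSup_le fun j => ?_
      rw [hbm j ω]
      exact Finset.sup'_le _ _ fun i _ =>
        Finset.le_sup' (fun i => margF (σ i) η (X i ω)) (Finset.mem_univ i)
    · refine Finset.sup'_le _ _ fun i _ => ?_
      have h1 : margF (σ i) η (X i ω) ≤ blockMax B σ η X (B i) ω := by
        rw [hbm (B i) ω]
        refine Finset.le_sup' (fun i => margF (σ i) η (X i ω)) ?_
        simp
      refine h1.trans (le_ciSup (f := fun j => blockMax B σ η X j ω)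
        ((Set.finite_range _).bddAbove) (B i))
  refine ⟨⟨?_, ?_, ?_⟩, ?_, ?_⟩
  · -- marginals
    intro i t htpos
    have hset : {ω : Ω | X i ω ≤ t} = {ω | ∀ k ∈ ({i} : Finset (Fin d)), X k ω ≤
        (fun _ => t) k} := by
      ext ω; simp
    rw [hset, prob_le_subset hd X σ hσ α η hα hη hjoint {i} _ (fun _ _ => htpos)]
    congr 2
    rw [Finset.sum_singleton]
    rw [Real.mul_rpow (Real.rpow_nonneg (hσ i).le _) (Real.rpow_nonneg htpos.le _),
      ← Real.rpow_mul (hσ i).le, ← Real.rpow_mul htpos.le]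
    have h1 : η / α * (α / η) = 1 := by field_simp
    have h2 : -1 / α * (α / η) = -1 / η := by field_simp
    rw [h1, h2, Real.rpow_one, neg_mul]
  · -- positivity of the joint df
    intro t ht
    unfold jointF
    rw [hjoint t ht, ENNReal.toReal_ofReal (Real.exp_nonneg _)]
    exact Real.exp_pos _
  · -- homogeneity
    intro c hc t ht
    have hJ : ∀ s : Fin d → ℝ, (∀ i, 0 < s i) →
        expo X s = (∑ i, σ i ^ (η / α) * s i ^ (-1 / α)) ^ (α / η) := by
      intro s hs
      unfold expo jointF
      rw [hjoint s hs, ENNReal.toReal_ofReal (Real.exp_nonneg _), Real.log_exp, neg_neg]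
    have hct : ∀ i, 0 < c * t i := fun i => mul_pos hc (ht i)
    rw [hJ _ hct, hJ t ht]
    have hsum : (∑ i, σ i ^ (η / α) * (c * t i) ^ (-1 / α))
        = c ^ (-1 / α) * (∑ i, σ i ^ (η / α) * t i ^ (-1 / α)) := by
      rw [Finset.mul_sum]
      refine Finset.sum_congr rfl fun i _ => ?_
      rw [Real.mul_rpow hc.le (ht i).le]
      ring
    rw [hsum]
    have hL : 0 ≤ ∑ i, σ i ^ (η / α) * t i ^ (-1 / α) :=
      Finset.sum_nonneg fun i _ => by
        have := hσ i; have := ht i; positivity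
    rw [Real.mul_rpow (Real.rpow_nonneg hc.le _) hL, ← Real.rpow_mul hc.le]
    have h2 : -1 / α * (α / η) = -1 / η := by field_simp
    rw [h2]
  · -- epsFun
    unfold epsFun
    simp only [Real.rpow_one]
    have hInt : (∫ ω, ⨆ j, blockMax B σ η X j ω ∂ℙ)
        = (d : ℝ) ^ (α / η) / ((d : ℝ) ^ (α / η) + 1) := by
      have hfun : (fun ω => ⨆ j, blockMax B σ η X j ω) =
          fun ω => Finset.univ.sup' Finset.univ_nonempty
            (fun i => margF (σ i) η (X i ω)) := funext hsup
      rw [hfun, integral_sup'_eq hd X hX σ hσ α η hα hη hjoint Finset.univ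
        Finset.univ_nonempty]
      simp
    rw [hInt]
    have hcpos : (0 : ℝ) < (d : ℝ) ^ (α / η) :=
      Real.rpow_pos_of_pos (by exact_mod_cast hd) _
    set cc : ℝ := (d : ℝ) ^ (α / η)
    have h1 : cc + 1 ≠ 0 := by positivity
    have h2 : 1 - cc / (cc + 1) = 1 / (cc + 1) := by field_simp; ring
    rw [h2]
    field_simp
  · -- epsBlock
    intro j
    unfold epsBlock
    simp only [Real.rpow_one]
    have hfun : (fun ω => blockMax B σ η X j ω) =
        fun ω => (Finset.univ.filter fun i => B i = j).sup' (hBj j)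
          (fun i => margF (σ i) η (X i ω)) := funext (hbm j)
    rw [hfun, integral_sup'_eq hd X hX σ hσ α η hα hη hjoint _ (hBj j)]
    set cc : ℝ := ((Finset.univ.filter fun i => B i = j).card : ℝ) ^ (α / η) with hccdef
    have hcpos : (0 : ℝ) < cc := by
      refine Real.rpow_pos_of_pos ?_ _
      exact_mod_cast Finset.card_pos.mpr (hBj j)
    have h1 : cc + 1 ≠ 0 := by positivity
    have h2 : 1 - cc / (cc + 1) = 1 / (cc + 1) := by field_simp; ring
    rw [h2]
    field_simp
end
end

section
/- Let X = (X_1,…,X_d) be a random vector with joint distribution function F_X(t) = exp(−β max_{1≤i≤d} σ_i t_i^{−1/η} − (1−β)(Σ_{i=1}^d σ_i^{η/α} t_i^{−1/α})^{α/η}) for t ∈ (0,∞)^d, and let I = {1,…,d} be partitioned into two nonempty blocks I_1, I_2. Then the tail dependence coefficient of (X_{I_1}, X_{I_2}) equals lim_{t→∞} t · P(M(I_1) > 1 − 1/t, M(I_2) > 1 − 1/t) = β(1 − |I_1|^{α/η} − |I_2|^{α/η} + (|I_1| + |I_2|)^{α/η}) + |I_1|^{α/η} + |I_2|^{α/η}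 − (|I_1| + |I_2|)^{α/η}. -/
open MeasureTheory ProbabilityTheory Real Filter Topology
open scoped ProbabilityTheory

noncomputable section

/-- Auxiliary calculus limit: `t (1 - (1 - 1/t)^c) → c` as `t → ∞`. -/
lemma aux_lim16 (c : ℝ) :
    Tendsto (fun t : ℝ => t * (1 - (1 - 1/t) ^ c)) atTop (𝓝 c) := by
  have hderiv : HasDerivAt (fun x : ℝ => (1 - x) ^ c) (-c) 0 := by
    have h1 : HasDerivAt (fun x : ℝ => x ^ c) (c * (1:ℝ) ^ (c-1)) 1 :=
      Real.hasDerivAt_rpow_const (Or.inl one_ne_zero)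
    have h2 : HasDerivAt (fun x : ℝ => 1 - x) (-1) 0 := by
      simpa using (hasDerivAt_id (0:ℝ)).const_sub 1
    have h3 : HasDerivAt (fun x : ℝ => (1 - x) ^ c) ((c * (1:ℝ) ^ (c-1)) * (-1)) 0 := by
      have h1' : HasDerivAt (fun x : ℝ => x ^ c) (c * (1:ℝ) ^ (c-1)) ((fun x : ℝ => 1 - x) 0) := by
        simpa using h1
      exact h1'.comp 0 h2
    simpa using h3
  have hslope : Tendsto (slope (fun x : ℝ => (1 - x) ^ c) 0) (𝓝[≠] 0) (𝓝 (-c)) :=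
    hasDerivAt_iff_tendsto_slope.mp hderiv
  have hinv : Tendsto (fun t : ℝ => 1/t) atTop (𝓝[≠] (0:ℝ)) := by
    apply tendsto_nhdsWithin_of_tendsto_nhds_of_eventually_within
    · simpa using tendsto_inv_atTop_zero
    · filter_upwards [eventually_gt_atTop (0:ℝ)] with t ht
      simp [ne_of_gt, one_div, inv_pos.mpr ht, (inv_pos.mpr ht).ne']
  have := (hslope.comp hinv).neg
  rw [neg_neg] at this
  refine this.congr' ?_
  filter_upwards [eventually_gt_atTop (0:ℝ)] with t ht
  have h0 : (1:ℝ)/t ≠ 0 := by positivity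
  show -(slope (fun x : ℝ => (1 - x) ^ c) 0 (1/t)) = t * (1 - (1 - 1/t) ^ c)
  rw [slope_def_field]
  simp only [sub_zero, Real.one_rpow]
  field_simp
  ring

/-- `margF σ η x ≤ u` iff `x ≤ (σ / (-log u))^η`, for `u ∈ (0,1)`. -/
lemma margF_le_iff16 {σ η u x : ℝ} (hσ : 0 < σ) (hη : 0 < η) (hu0 : 0 < u) (hu1 : u < 1) :
    margF σ η x ≤ u ↔ x ≤ (σ / (-Real.log u)) ^ η := by
  have hs : 0 < -Real.log u := by
    have := Real.log_neg hu0 hu1; linarith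
  have hT : 0 < (σ / (-Real.log u)) ^ η := Real.rpow_pos_of_pos (by positivity) _
  unfold margF
  by_cases hx : 0 < x
  · rw [if_pos hx]
    have hηneg : (-η : ℝ) < 0 := by linarith
    constructor
    · intro h
      rw [← Real.exp_log hu0] at h
      have h' : -σ * x ^ (-1/η) ≤ Real.log u := Real.exp_le_exp.mp h
      have h2 : (-Real.log u) / σ ≤ x ^ (-1/η) := by
        rw [div_le_iff₀ hσ] at *
        nlinarith [Real.rpow_pos_of_pos hx (-1/η)]
      have h3 : (-1:ℝ)/η = (-η)⁻¹ := by field_simp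
      rw [h3] at h2
      have h4 := (Real.le_rpow_inv_iff_of_neg (by positivity) hx hηneg).mp h2
      calc x ≤ ((-Real.log u) / σ) ^ (-η) := h4
        _ = (σ / (-Real.log u)) ^ η := by
            rw [Real.rpow_neg (by positivity), ← Real.inv_rpow (by positivity), inv_div]
    · intro h
      have h3 : (-1:ℝ)/η = (-η)⁻¹ := by field_simp
      have h2 : (-Real.log u) / σ ≤ x ^ (-1/η) := by
        rw [h3, Real.le_rpow_inv_iff_of_neg (by positivity) hx hηneg]
        calc x ≤ (σ / (-Real.log u)) ^ η := h
          _ = ((-Real.log u) / σ) ^ (-η) := by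
            rw [Real.rpow_neg (by positivity), ← Real.inv_rpow (by positivity), inv_div]
      have : -σ * x ^ (-1/η) ≤ Real.log u := by
        rw [div_le_iff₀ hσ] at h2; nlinarith
      calc Real.exp (-σ * x ^ (-1/η)) ≤ Real.exp (Real.log u) := Real.exp_le_exp.mpr this
        _ = u := Real.exp_log hu0
  · rw [if_neg hx]
    constructor
    · intro _; linarith [hT, le_of_not_gt hx]
    · intro _; linarith

/-- The block maximum is at most `u` iff each member is. -/
lemma blockMax_le_iff16 {Ω : Type*} [MeasureSpace Ω] {d p : ℕ} (B : Fin d → Fin p)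
    (σ : Fin d → ℝ) (η : ℝ) (X : Fin d → Ω → ℝ) (j : Fin p) (ω : Ω) (u : ℝ)
    (hj : ∃ i, B i = j) :
    blockMax B σ η X j ω ≤ u ↔ ∀ i, B i = j → margF (σ i) η (X i ω) ≤ u := by
  obtain ⟨i0, hi0⟩ := hj
  have hfin : ((fun i => margF (σ i) η (X i ω)) '' {i | B i = j}).Finite :=
    Set.Finite.image _ (Set.toFinite _)
  have hne : ((fun i => margF (σ i) η (X i ω)) '' {i | B i = j}).Nonempty :=
    ⟨_, ⟨i0, hi0, rfl⟩⟩
  rw [blockMax, csSup_le_iff hfin.bddAbove hne]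
  constructor
  · intro h i hi
    exact h _ ⟨i, hi, rfl⟩
  · rintro h _ ⟨i, hi, rfl⟩
    exact h i hi

lemma prob_block16
    {Ω : Type*} [MeasureSpace Ω] [IsProbabilityMeasure (ℙ : Measure Ω)]
    {d : ℕ} (hd : 0 < d)
    (X : Fin d → Ω → ℝ)
    (σ : Fin d → ℝ) (hσ : ∀ i, 0 < σ i)
    (α η : ℝ) (hα : 0 < α) (hη : 0 < η)
    (β : ℝ)
    (hjoint : ∀ t : Fin d → ℝ, (∀ i, 0 < t i) →
      ℙ {ω | ∀ i, X i ω ≤ t i} =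
        ENNReal.ofReal (Real.exp (-(β * ⨆ i, σ i * t i ^ (-1 / η)) -
          (1 - β) * (∑ i, σ i ^ (η / α) * t i ^ (-1 / α)) ^ (α / η))))
    (S : Finset (Fin d)) (hS : S.Nonempty) (u : ℝ) (hu0 : 0 < u) (hu1 : u < 1) :
    ℙ {ω | ∀ i ∈ S, X i ω ≤ (σ i / (-Real.log u)) ^ η}
      = ENNReal.ofReal (u ^ (β + (1 - β) * (S.card : ℝ) ^ (α / η))) := by
  have hs : 0 < -Real.log u := by have := Real.log_neg hu0 hu1; linarith
  set s : ℝ := -Real.log u with hsdef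
  set T : Fin d → ℝ := fun i => (σ i / s) ^ η with hTdef
  have hT : ∀ i, 0 < T i := fun i => Real.rpow_pos_of_pos (div_pos (hσ i) hs) _
  set t : ℕ → Fin d → ℝ := fun n i => if i ∈ S then T i else T i + n with htdef
  have ht_pos : ∀ n i, 0 < t n i := by
    intro n i; by_cases h : i ∈ S
    · simpa [htdef, h] using hT i
    · simp only [htdef, if_neg h]
      have := hT i; positivity
  have hmono : Monotone fun n => {ω | ∀ i, X i ω ≤ t n i} := by
    intro m n hmn ω hω i
    by_cases h : i ∈ S
    · simpa [htdef, h] using hω i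
    · have := hω i
      simp only [htdef, if_neg h] at this ⊢
      have : X i ω ≤ T i + m := this
      have hc : (m:ℝ) ≤ n := Nat.cast_le.mpr hmn
      linarith
  have hUnion : (⋃ n, {ω | ∀ i, X i ω ≤ t n i}) = {ω | ∀ i ∈ S, X i ω ≤ T i} := by
    ext ω
    simp only [Set.mem_iUnion, Set.mem_setOf_eq]
    constructor
    · rintro ⟨n, hn⟩ i hi
      simpa [htdef, hi] using hn i
    · intro h
      have hne : (Finset.univ : Finset (Fin d)).Nonempty := by
        simpa [Finset.univ_nonempty_iff] using Fin.pos_iff_nonempty.mp hd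
      obtain ⟨n, hn⟩ := exists_nat_ge (Finset.univ.sup' hne fun i => X i ω - T i)
      refine ⟨n, fun i => ?_⟩
      have hle : X i ω - T i ≤ n :=
        le_trans (Finset.le_sup' (fun i => X i ω - T i) (Finset.mem_univ i)) hn
      by_cases hi : i ∈ S
      · simpa [htdef, hi] using h i hi
      · simp only [htdef, if_neg hi]; linarith
  have key1 : ∀ i ∈ S, σ i * T i ^ (-1 / η) = s := by
    intro i _
    have hb : (0:ℝ) ≤ σ i / s := (div_pos (hσ i) hs).le
    rw [hTdef, ← Real.rpow_mul hb]
    have : η * (-1 / η) = -1 := by field_simp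
    rw [this, Real.rpow_neg_one, inv_div]
    rw [mul_div_assoc']
    exact mul_div_cancel_left₀ s (hσ i).ne'
  have key2 : ∀ i ∈ S, σ i ^ (η / α) * T i ^ (-1 / α) = s ^ (η / α) := by
    intro i _
    have hb : (0:ℝ) ≤ σ i / s := (div_pos (hσ i) hs).le
    rw [hTdef, ← Real.rpow_mul hb]
    have : η * (-1 / α) = -(η / α) := by field_simp
    rw [this, Real.rpow_neg hb, Real.div_rpow (hσ i).le hs.le, inv_div, mul_div_assoc']
    exact mul_div_cancel_left₀ _ (Real.rpow_pos_of_pos (hσ i) _).ne'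
  have hsup_ev : ∀ᶠ n : ℕ in atTop, (⨆ i, σ i * t n i ^ (-1 / η)) = s := by
    have hev : ∀ᶠ n : ℕ in atTop, ∀ i, σ i * t n i ^ (-1 / η) ≤ s := by
      rw [eventually_all]
      intro i
      by_cases hi : i ∈ S
      · filter_upwards with n
        simp only [htdef, if_pos hi]
        exact (key1 i hi).le
      · have htend : Tendsto (fun n : ℕ => σ i * (T i + n) ^ (-1 / η)) atTop (𝓝 0) := by
          have h1 : Tendsto (fun n : ℕ => T i + (n:ℝ)) atTop atTop :=
            tendsto_atTop_add_const_left _ _ tendsto_natCast_atTop_atTop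
          have h2 : Tendsto (fun x : ℝ => x ^ (-(1/η))) atTop (𝓝 0) :=
            tendsto_rpow_neg_atTop (by positivity)
          have := (h2.comp h1).const_mul (σ i)
          simpa [neg_div, mul_zero] using this
        filter_upwards [htend.eventually (eventually_le_nhds hs)] with n hn
        simpa [htdef, if_neg hi] using hn
    obtain ⟨i0, hi0⟩ := hS
    haveI : Nonempty (Fin d) := Fin.pos_iff_nonempty.mp hd
    filter_upwards [hev] with n hn
    refine le_antisymm (ciSup_le hn) ?_
    have : σ i0 * t n i0 ^ (-1 / η) = s := by
      simp only [htdef, if_pos hi0]; exact key1 i0 hi0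
    calc s = σ i0 * t n i0 ^ (-1 / η) := this.symm
      _ ≤ ⨆ i, σ i * t n i ^ (-1 / η) :=
        le_ciSup (f := fun i => σ i * t n i ^ (-1 / η))
          (Set.Finite.bddAbove (Set.finite_range _)) i0
  have hsum_tend : Tendsto (fun n : ℕ => ∑ i, σ i ^ (η / α) * t n i ^ (-1 / α)) atTop
      (𝓝 ((S.card : ℝ) * s ^ (η / α))) := by
    have hsplit : ∀ n : ℕ, ∑ i, σ i ^ (η / α) * t n i ^ (-1 / α)
        = (S.card : ℝ) * s ^ (η / α) + ∑ i ∈ Sᶜ, σ i ^ (η / α) * (T i + n) ^ (-1 / α) := by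
      intro n
      rw [← Finset.sum_add_sum_compl S]
      congr 1
      · rw [Finset.sum_congr rfl (fun i hi => by
          simp only [htdef, if_pos hi]; exact key2 i hi)]
        simp [mul_comm]
      · refine Finset.sum_congr rfl fun i hi => ?_
        simp only [Finset.mem_compl] at hi
        simp [htdef, if_neg hi]
    simp only [hsplit]
    have h0 : Tendsto (fun n : ℕ => ∑ i ∈ Sᶜ, σ i ^ (η / α) * (T i + n) ^ (-1 / α)) atTop
        (𝓝 0) := by
      have : Tendsto (fun n : ℕ => ∑ i ∈ Sᶜ, σ i ^ (η / α) * (T i + n) ^ (-1 / α)) atTop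
          (𝓝 (∑ i ∈ Sᶜ, 0)) := by
        refine tendsto_finset_sum _ fun i _ => ?_
        have h1 : Tendsto (fun n : ℕ => T i + (n:ℝ)) atTop atTop :=
          tendsto_atTop_add_const_left _ _ tendsto_natCast_atTop_atTop
        have h2 : Tendsto (fun x : ℝ => x ^ (-(1/α))) atTop (𝓝 0) :=
          tendsto_rpow_neg_atTop (by positivity)
        have := (h2.comp h1).const_mul (σ i ^ (η / α))
        simpa [neg_div, mul_zero] using this
      simpa using this
    simpa using (tendsto_const_nhds.add h0)
  have hcard : (0:ℝ) < S.card := by exact_mod_cast Finset.card_pos.mpr hS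
  have hlim : Tendsto (fun n => ℙ {ω | ∀ i, X i ω ≤ t n i}) atTop
      (𝓝 (ENNReal.ofReal (u ^ (β + (1 - β) * (S.card : ℝ) ^ (α / η))))) := by
    have hval : ∀ n, ℙ {ω | ∀ i, X i ω ≤ t n i} =
        ENNReal.ofReal (Real.exp (-(β * ⨆ i, σ i * t n i ^ (-1 / η)) -
          (1 - β) * (∑ i, σ i ^ (η / α) * t n i ^ (-1 / α)) ^ (α / η))) :=
      fun n => hjoint (t n) (ht_pos n)
    rw [show (fun n => ℙ {ω | ∀ i, X i ω ≤ t n i}) = fun n =>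
        ENNReal.ofReal (Real.exp (-(β * ⨆ i, σ i * t n i ^ (-1 / η)) -
          (1 - β) * (∑ i, σ i ^ (η / α) * t n i ^ (-1 / α)) ^ (α / η))) from funext hval]
    have hreal : Tendsto (fun n : ℕ => Real.exp (-(β * ⨆ i, σ i * t n i ^ (-1 / η)) -
        (1 - β) * (∑ i, σ i ^ (η / α) * t n i ^ (-1 / α)) ^ (α / η))) atTop
        (𝓝 (u ^ (β + (1 - β) * (S.card : ℝ) ^ (α / η)))) := by
      have hpow : Tendsto (fun n : ℕ => (∑ i, σ i ^ (η / α) * t n i ^ (-1 / α)) ^ (α / η)) atTop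
          (𝓝 (((S.card : ℝ) * s ^ (η / α)) ^ (α / η))) := by
        have hcont : ContinuousAt (fun x : ℝ => x ^ (α / η)) ((S.card : ℝ) * s ^ (η / α)) :=
          Real.continuousAt_rpow_const _ _
            (Or.inl (mul_pos hcard (Real.rpow_pos_of_pos hs _)).ne')
        exact hcont.tendsto.comp hsum_tend
      have hmain : Tendsto (fun n : ℕ => Real.exp (-(β * s) -
          (1 - β) * (∑ i, σ i ^ (η / α) * t n i ^ (-1 / α)) ^ (α / η))) atTop
          (𝓝 (Real.exp (-(β * s) - (1 - β) * (((S.card : ℝ) * s ^ (η / α)) ^ (α / η))))) := by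
        exact (Real.continuous_exp.tendsto _).comp
          ((tendsto_const_nhds.sub ((hpow.const_mul (1 - β)))))
      have hid : Real.exp (-(β * s) - (1 - β) * (((S.card : ℝ) * s ^ (η / α)) ^ (α / η)))
          = u ^ (β + (1 - β) * (S.card : ℝ) ^ (α / η)) := by
        have h1 : ((S.card : ℝ) * s ^ (η / α)) ^ (α / η)
            = (S.card : ℝ) ^ (α / η) * s := by
          rw [Real.mul_rpow hcard.le (Real.rpow_pos_of_pos hs _).le, ← Real.rpow_mul hs.le]
          have : η / α * (α / η) = 1 := by field_simp
          rw [this, Real.rpow_one]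
        rw [h1, Real.rpow_def_of_pos hu0]
        congr 1
        have hlog : Real.log u = -s := by rw [hsdef]; ring
        rw [hlog]; ring
      rw [← hid]
      refine hmain.congr' ?_
      filter_upwards [hsup_ev] with n hn
      rw [hn]
    exact (ENNReal.continuous_ofReal.tendsto _).comp hreal
  have hlim2 : Tendsto (fun n => ℙ {ω | ∀ i, X i ω ≤ t n i}) atTop
      (𝓝 (ℙ (⋃ n, {ω | ∀ i, X i ω ≤ t n i}))) :=
    tendsto_measure_iUnion_atTop hmono
  rw [← hUnion]
  exact tendsto_nhds_unique hlim2 hlim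

theorem statement16
    {Ω : Type*} [MeasureSpace Ω] [IsProbabilityMeasure (ℙ : Measure Ω)]
    {d : ℕ} (hd : 0 < d)
    (X : Fin d → Ω → ℝ) (hX : ∀ i, Measurable (X i))
    (σ : Fin d → ℝ) (hσ : ∀ i, 0 < σ i)
    (α η : ℝ) (hα : 0 < α) (hαη : α ≤ η) (hη1 : η ≤ 1)
    (β : ℝ) (hβ0 : 0 ≤ β) (hβ1 : β ≤ 1)
    (hjoint : ∀ t : Fin d → ℝ, (∀ i, 0 < t i) →
      ℙ {ω | ∀ i, X i ω ≤ t i} =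
        ENNReal.ofReal (Real.exp (-(β * ⨆ i, σ i * t i ^ (-1 / η)) -
          (1 - β) * (∑ i, σ i ^ (η / α) * t i ^ (-1 / α)) ^ (α / η))))
    (B : Fin d → Fin 2) (hB : Function.Surjective B) :
    Tendsto (fun t : ℝ => t * (ℙ {ω | 1 - 1 / t < blockMax B σ η X 0 ω ∧
        1 - 1 / t < blockMax B σ η X 1 ω}).toReal) atTop
      (𝓝 (β * (1 - ((Finset.univ.filter fun i => B i = 0).card : ℝ) ^ (α / η)
            - ((Finset.univ.filter fun i => B i = 1).card : ℝ) ^ (α / η)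
            + (((Finset.univ.filter fun i => B i = 0).card : ℝ)
              + ((Finset.univ.filter fun i => B i = 1).card : ℝ)) ^ (α / η))
          + ((Finset.univ.filter fun i => B i = 0).card : ℝ) ^ (α / η)
          + ((Finset.univ.filter fun i => B i = 1).card : ℝ) ^ (α / η)
          - (((Finset.univ.filter fun i => B i = 0).card : ℝ)
            + ((Finset.univ.filter fun i => B i = 1).card : ℝ)) ^ (α / η))) := by
  have hη : 0 < η := lt_of_lt_of_le hα hαη
  set S0 : Finset (Fin d) := Finset.univ.filter fun i => B i = 0 with hS0def
  set S1 : Finset (Fin d) := Finset.univ.filter fun i => B i = 1 with hS1def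
  have hS0 : S0.Nonempty := by
    obtain ⟨i, hi⟩ := hB 0; exact ⟨i, by simp [hS0def, hi]⟩
  have hS1 : S1.Nonempty := by
    obtain ⟨i, hi⟩ := hB 1; exact ⟨i, by simp [hS1def, hi]⟩
  have hdisj : Disjoint S0 S1 := by
    rw [Finset.disjoint_left]
    intro i hi0 hi1
    simp only [hS0def, hS1def, Finset.mem_filter] at hi0 hi1
    rw [hi0.2] at hi1
    exact absurd hi1.2 (by decide)
  set k0 : ℝ := (S0.card : ℝ) with hk0def
  set k1 : ℝ := (S1.card : ℝ) with hk1def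
  have hcardU : ((S0 ∪ S1).card : ℝ) = k0 + k1 := by
    rw [hk0def, hk1def, ← Nat.cast_add, Finset.card_union_of_disjoint hdisj]
  -- the eventual formula for the probability
  have hev : ∀ᶠ t : ℝ in atTop,
      t * (ℙ {ω | 1 - 1 / t < blockMax B σ η X 0 ω ∧
        1 - 1 / t < blockMax B σ η X 1 ω}).toReal
      = t * (1 - (1 - 1/t) ^ (β + (1 - β) * k0 ^ (α / η))
          - (1 - 1/t) ^ (β + (1 - β) * k1 ^ (α / η))
          + (1 - 1/t) ^ (β + (1 - β) * (k0 + k1) ^ (α / η))) := by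
    filter_upwards [eventually_gt_atTop (1:ℝ)] with t ht
    have ht0 : 0 < t := lt_trans one_pos ht
    set u : ℝ := 1 - 1/t with hudef
    have hu0 : 0 < u := by
      have : 1/t < 1 := by rw [div_lt_one ht0]; exact ht
      simp only [hudef]; linarith
    have hu1 : u < 1 := by
      have : 0 < 1/t := by positivity
      simp only [hudef]; linarith
    set T : Fin d → ℝ := fun i => (σ i / (-Real.log u)) ^ η with hTdef
    set C0 : Set Ω := {ω | ∀ i ∈ S0, X i ω ≤ T i} with hC0def
    set C1 : Set Ω := {ω | ∀ i ∈ S1, X i ω ≤ T i} with hC1def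
    have hmeas : ∀ (S : Finset (Fin d)), MeasurableSet {ω : Ω | ∀ i ∈ S, X i ω ≤ T i} := by
      intro S
      have : {ω : Ω | ∀ i ∈ S, X i ω ≤ T i} = ⋂ i ∈ S, (X i) ⁻¹' (Set.Iic (T i)) := by
        ext ω; simp
      rw [this]
      exact MeasurableSet.biInter (Set.to_countable _)
        (fun i _ => (hX i) measurableSet_Iic)
    have hblock : ∀ (j : Fin 2) (Sj : Finset (Fin d)),
        (Sj = Finset.univ.filter fun i => B i = j) → ∀ ω,
        (blockMax B σ η X j ω ≤ u ↔ ∀ i ∈ Sj, X i ω ≤ T i) := by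
      intro j Sj hSj ω
      rw [blockMax_le_iff16 B σ η X j ω u (hB j)]
      constructor
      · intro h i hi
        rw [hSj, Finset.mem_filter] at hi
        exact (margF_le_iff16 (hσ i) hη hu0 hu1).mp (h i hi.2)
      · intro h i hi
        refine (margF_le_iff16 (hσ i) hη hu0 hu1).mpr (h i ?_)
        rw [hSj, Finset.mem_filter]
        exact ⟨Finset.mem_univ i, hi⟩
    have hset : {ω | u < blockMax B σ η X 0 ω ∧ u < blockMax B σ η X 1 ω}
        = (C0 ∪ C1)ᶜ := by
      ext ω
      simp only [Set.mem_setOf_eq, Set.mem_compl_iff, Set.mem_union, not_or,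
        hC0def, hC1def]
      rw [← not_le, ← not_le, hblock 0 S0 hS0def ω, hblock 1 S1 hS1def ω]
    have hP0 : ℙ C0 = ENNReal.ofReal (u ^ (β + (1 - β) * k0 ^ (α / η))) := by
      rw [hC0def, hTdef, hk0def]
      exact prob_block16 hd X σ hσ α η hα hη β hjoint S0 hS0 u hu0 hu1
    have hP1 : ℙ C1 = ENNReal.ofReal (u ^ (β + (1 - β) * k1 ^ (α / η))) := by
      rw [hC1def, hTdef, hk1def]
      exact prob_block16 hd X σ hσ α η hα hη β hjoint S1 hS1 u hu0 hu1
    have hP01 : ℙ (C0 ∩ C1) = ENNReal.ofReal (u ^ (β + (1 - β) * (k0 + k1) ^ (α / η))) := by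
      have hint : C0 ∩ C1 = {ω | ∀ i ∈ S0 ∪ S1, X i ω ≤ T i} := by
        ext ω
        simp only [hC0def, hC1def, Set.mem_inter_iff, Set.mem_setOf_eq, Finset.mem_union]
        constructor
        · rintro ⟨h0, h1⟩ i (hi | hi)
          exacts [h0 i hi, h1 i hi]
        · intro h
          exact ⟨fun i hi => h i (Or.inl hi), fun i hi => h i (Or.inr hi)⟩
      rw [hint, ← hcardU, hTdef]
      exact prob_block16 hd X σ hσ α η hα hη β hjoint (S0 ∪ S1) (hS0.mono Finset.subset_union_left)
        u hu0 hu1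
    -- inclusion-exclusion
    have hfin : ∀ s : Set Ω, ℙ s ≠ ⊤ := fun s => measure_ne_top _ _
    have hIE : (ℙ (C0 ∪ C1)).toReal
        = u ^ (β + (1 - β) * k0 ^ (α / η)) + u ^ (β + (1 - β) * k1 ^ (α / η))
          - u ^ (β + (1 - β) * (k0 + k1) ^ (α / η)) := by
      have h := measure_union_add_inter (μ := (ℙ : Measure Ω)) C0 (hmeas S1)
      have h' := congrArg ENNReal.toReal h
      rw [ENNReal.toReal_add (hfin _) (hfin _), ENNReal.toReal_add (hfin _) (hfin _),
        hP0, hP1, hP01] at h'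
      rw [ENNReal.toReal_ofReal (Real.rpow_pos_of_pos hu0 _).le,
        ENNReal.toReal_ofReal (Real.rpow_pos_of_pos hu0 _).le,
        ENNReal.toReal_ofReal (Real.rpow_pos_of_pos hu0 _).le] at h'
      linarith
    have hcompl : (ℙ ((C0 ∪ C1)ᶜ)).toReal = 1 - (ℙ (C0 ∪ C1)).toReal := by
      rw [measure_compl ((hmeas S0).union (hmeas S1)) (hfin _)]
      rw [measure_univ]
      rw [ENNReal.toReal_sub_of_le prob_le_one ENNReal.one_ne_top, ENNReal.toReal_one]
    rw [hset, hcompl, hIE]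
    ring
  have hlim : Tendsto (fun t : ℝ => t * (1 - (1 - 1/t) ^ (β + (1 - β) * k0 ^ (α / η))
      - (1 - 1/t) ^ (β + (1 - β) * k1 ^ (α / η))
      + (1 - 1/t) ^ (β + (1 - β) * (k0 + k1) ^ (α / η)))) atTop
      (𝓝 ((β + (1 - β) * k0 ^ (α / η)) + (β + (1 - β) * k1 ^ (α / η))
        - (β + (1 - β) * (k0 + k1) ^ (α / η)))) := by
    have h0 := aux_lim16 (β + (1 - β) * k0 ^ (α / η))
    have h1 := aux_lim16 (β + (1 - β) * k1 ^ (α / η))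
    have h2 := aux_lim16 (β + (1 - β) * (k0 + k1) ^ (α / η))
    have hcomb := (h0.add h1).sub h2
    refine hcomb.congr fun t => ?_
    ring
  have hEq : β * (1 - k0 ^ (α / η) - k1 ^ (α / η) + (k0 + k1) ^ (α / η))
      + k0 ^ (α / η) + k1 ^ (α / η) - (k0 + k1) ^ (α / η)
      = (β + (1 - β) * k0 ^ (α / η)) + (β + (1 - β) * k1 ^ (α / η))
        - (β + (1 - β) * (k0 + k1) ^ (α / η)) := by ring
  rw [hEq]
  exact hlim.congr' (hev.mono fun t h => h.symm)
end
end

section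
/- Let d = 2, i.e. X = (X_1, X_2) satisfies conditions (i) and (ii), and write L = ℓ(σ_1^η, σ_2^η) (so 1 ≤ L ≤ 2). If L < 2 (tail dependence), then lim_{t→∞} t · P(F_1(X_1) > 1 − 1/t, F_2(X_2) > 1 − 1/t) = 2 − L, so the Ledford–Tawn condition P(F_1(X_1) > 1 − 1/t, F_2(X_2) > 1 − 1/t) = t^{−1/κ} 𝓛(t) holds with coefficient of asymptotic tail independence κ = 1 and 𝓛(t) → 2 − L. If L = 2 (independence in the tail), then P(F_1(X_1) > 1 − 1/t, F_2(X_2) > 1 − 1/t) = t^{−2} exactly for all t > 1, so the Ledford–Tawn condition holds with κ = 1/2 and 𝓛 ≡ 1. -/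
open MeasureTheory ProbabilityTheory Real Filter Topology
open scoped ProbabilityTheory

noncomputable section

lemma key18
    {Ω : Type*} [MeasureSpace Ω] [IsProbabilityMeasure (ℙ : Measure Ω)]
    (X : Fin 2 → Ω → ℝ) (hX : ∀ i, Measurable (X i))
    (σ : Fin 2 → ℝ) (hσ : ∀ i, 0 < σ i)
    (η : ℝ) (hη0 : 0 < η)
    (hmarg : ∀ i, ∀ t : ℝ, 0 < t →
      ℙ {ω | X i ω ≤ t} = ENNReal.ofReal (Real.exp (-σ i * t ^ (-1 / η))))
    (hpos : ∀ t : Fin 2 → ℝ, (∀ i, 0 < t i) → 0 < jointF X t)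
    (hhom : ∀ c : ℝ, 0 < c → ∀ t : Fin 2 → ℝ, (∀ i, 0 < t i) →
      expo X (fun i => c * t i) = c ^ (-1 / η) * expo X t)
    (L : ℝ) (hL : L = expo X (fun i => σ i ^ η))
    (t : ℝ) (ht : 1 < t) :
    (ℙ {ω | 1 - 1 / t < margF (σ 0) η (X 0 ω) ∧
        1 - 1 / t < margF (σ 1) η (X 1 ω)}).toReal
      = 2 / t - 1 + (1 - 1 / t) ^ L := by
  have ht0 : (0:ℝ) < t := lt_trans one_pos ht
  set a : ℝ := 1 - 1 / t with ha_def
  have ha0 : 0 < a := by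
    have h : 1 / t < 1 := (div_lt_one ht0).mpr ht
    rw [ha_def]; linarith
  have ha1 : a < 1 := by
    have h : 0 < 1 / t := by positivity
    rw [ha_def]; linarith
  set s : ℝ := -Real.log a with hs_def
  have hs : 0 < s := by
    have h := Real.log_neg ha0 ha1
    rw [hs_def]; linarith
  have hηne : η ≠ 0 := ne_of_gt hη0
  set u : Fin 2 → ℝ := fun i => (σ i / s) ^ η with hu_def
  have hu : ∀ i, 0 < u i := fun i => Real.rpow_pos_of_pos (div_pos (hσ i) hs) η
  -- u i ^ (-1/η) = s / σ i
  have huexp : ∀ i, (u i) ^ (-1/η) = s / σ i := by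
    intro i
    have h1 : (u i) ^ (-1/η) = (σ i / s) ^ (η * (-1/η)) := by
      rw [hu_def, ← Real.rpow_mul (div_pos (hσ i) hs).le]
    rw [h1]
    have : η * (-1/η) = -1 := by field_simp
    rw [this, Real.rpow_neg_one, inv_div]
  -- set equality
  have hiff : ∀ i x, (a < margF (σ i) η x ↔ u i < x) := by
    intro i x
    unfold margF
    split_ifs with hx
    · rw [show (a < Real.exp (-σ i * x ^ (-1/η))) ↔ Real.log a < -σ i * x ^ (-1/η) from
        (Real.log_lt_iff_lt_exp ha0).symm]
      have hiff2 : Real.log a < -σ i * x ^ (-1/η) ↔ σ i * x ^ (-1/η) < s := by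
        constructor <;> intro h <;> simp [hs_def] at * <;> linarith
      rw [hiff2, mul_comm, ← lt_div_iff₀ (hσ i)]
      rw [← huexp i]
      exact Real.rpow_lt_rpow_iff_of_neg hx (hu i) (div_neg_of_neg_of_pos (by norm_num) hη0)
    · push_neg at hx
      constructor
      · intro h; linarith
      · intro h; linarith [hu i]
  have hset : {ω | a < margF (σ 0) η (X 0 ω) ∧ a < margF (σ 1) η (X 1 ω)}
      = ({ω | X 0 ω ≤ u 0} ∪ {ω | X 1 ω ≤ u 1})ᶜ := by
    ext ω
    simp only [Set.mem_setOf_eq, Set.mem_compl_iff, Set.mem_union, not_or, not_le,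
      hiff 0, hiff 1]
  set A : Set Ω := {ω | X 0 ω ≤ u 0}
  set B : Set Ω := {ω | X 1 ω ≤ u 1}
  have hA : MeasurableSet A := (hX 0) measurableSet_Iic
  have hB : MeasurableSet B := (hX 1) measurableSet_Iic
  -- marginal probabilities
  have hPA : (ℙ A).toReal = a := by
    have := hmarg 0 (u 0) (hu 0)
    rw [show A = {ω | X 0 ω ≤ u 0} from rfl, this, ENNReal.toReal_ofReal (Real.exp_pos _).le,
      huexp 0]
    have h0 : -σ 0 * (s / σ 0) = -s := by
      have := (hσ 0).ne'
      field_simp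
    rw [h0, hs_def, neg_neg, Real.exp_log ha0]
  have hPB : (ℙ B).toReal = a := by
    have := hmarg 1 (u 1) (hu 1)
    rw [show B = {ω | X 1 ω ≤ u 1} from rfl, this, ENNReal.toReal_ofReal (Real.exp_pos _).le,
      huexp 1]
    have h0 : -σ 1 * (s / σ 1) = -s := by
      have := (hσ 1).ne'
      field_simp
    rw [h0, hs_def, neg_neg, Real.exp_log ha0]
  -- joint probability
  have hAB : A ∩ B = {ω | ∀ i, X i ω ≤ u i} := by
    ext ω; simp [A, B, Fin.forall_fin_two, Set.mem_inter_iff]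
  have hPAB : (ℙ (A ∩ B)).toReal = a ^ L := by
    have hjf : (ℙ (A ∩ B)).toReal = jointF X u := by rw [hAB]; rfl
    have hexpo : expo X u = s * L := by
      have hc : (0:ℝ) < s ^ (-η) := Real.rpow_pos_of_pos hs _
      have hui : ∀ i, u i = s ^ (-η) * σ i ^ η := by
        intro i
        show (σ i / s) ^ η = s ^ (-η) * σ i ^ η
        rw [Real.div_rpow (hσ i).le hs.le, div_eq_mul_inv, mul_comm,
          ← Real.rpow_neg hs.le]
      have hth : ∀ i : Fin 2, (0:ℝ) < σ i ^ η := fun i => Real.rpow_pos_of_pos (hσ i) η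
      have := hhom (s ^ (-η)) hc (fun i => σ i ^ η) hth
      have heq : u = fun i => s ^ (-η) * σ i ^ η := funext hui
      rw [heq, this, ← hL]
      have : (s ^ (-η)) ^ (-1/η) = s := by
        rw [← Real.rpow_mul hs.le]
        have : -η * (-1/η) = 1 := by field_simp
        rw [this, Real.rpow_one]
      rw [this]
    have hjpos : 0 < jointF X u := hpos u hu
    have hlog : Real.log (jointF X u) = -(s * L) := by
      have : -Real.log (jointF X u) = s * L := hexpo
      linarith
    have : jointF X u = Real.exp (-(s * L)) := by
      rw [← hlog, Real.exp_log hjpos]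
    rw [hjf, this, Real.rpow_def_of_pos ha0]
    congr 1
    rw [hs_def]; ring
  -- inclusion-exclusion
  have hunion : (ℙ (A ∪ B)).toReal = a + a - a ^ L := by
    have h := measure_union_add_inter (μ := ℙ) A hB
    have h2 : (ℙ (A ∪ B)).toReal + (ℙ (A ∩ B)).toReal = (ℙ A).toReal + (ℙ B).toReal := by
      rw [← ENNReal.toReal_add (measure_ne_top _ _) (measure_ne_top _ _), ← ENNReal.toReal_add (measure_ne_top _ _) (measure_ne_top _ _), h]
    rw [hPA, hPB, hPAB] at h2
    linarith
  rw [hset]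
  rw [prob_compl_eq_one_sub (hA.union hB)]
  rw [ENNReal.toReal_sub_of_le prob_le_one ENNReal.one_ne_top]
  rw [ENNReal.toReal_one, hunion]
  have : a = 1 - 1/t := ha_def
  rw [this]
  ring_nf

theorem statement18
    {Ω : Type*} [MeasureSpace Ω] [IsProbabilityMeasure (ℙ : Measure Ω)]
    (X : Fin 2 → Ω → ℝ) (hX : ∀ i, Measurable (X i))
    (σ : Fin 2 → ℝ) (hσ : ∀ i, 0 < σ i)
    (η : ℝ) (hη0 : 0 < η) (hη1 : η ≤ 1)
    (hmarg : ∀ i, ∀ t : ℝ, 0 < t →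
      ℙ {ω | X i ω ≤ t} = ENNReal.ofReal (Real.exp (-σ i * t ^ (-1 / η))))
    (hpos : ∀ t : Fin 2 → ℝ, (∀ i, 0 < t i) → 0 < jointF X t)
    (hhom : ∀ c : ℝ, 0 < c → ∀ t : Fin 2 → ℝ, (∀ i, 0 < t i) →
      expo X (fun i => c * t i) = c ^ (-1 / η) * expo X t)
    (L : ℝ) (hL : L = expo X (fun i => σ i ^ η)) :
    (L < 2 →
      Tendsto (fun t : ℝ => t * (ℙ {ω | 1 - 1 / t < margF (σ 0) η (X 0 ω) ∧
          1 - 1 / t < margF (σ 1) η (X 1 ω)}).toReal) atTop (𝓝 (2 - L))) ∧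
    (L = 2 → ∀ t : ℝ, 1 < t →
      (ℙ {ω | 1 - 1 / t < margF (σ 0) η (X 0 ω) ∧
          1 - 1 / t < margF (σ 1) η (X 1 ω)}).toReal = t ^ (-2 : ℝ)) := by
  have key := key18 X hX σ hσ η hη0 hmarg hpos hhom L hL
  constructor
  · intro _
    -- slope limit
    have hd1 : HasDerivAt (fun x : ℝ => 1 - x) (-1 : ℝ) 0 := by
      exact (hasDerivAt_id' (0:ℝ)).const_sub 1
    have hd : HasDerivAt (fun x : ℝ => (1 - x) ^ L) (-L) 0 := by
      have h2 : HasDerivAt (fun y : ℝ => y ^ L) (L * (1:ℝ) ^ (L - 1))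
          ((fun x : ℝ => 1 - x) 0) := by
        have e : ((fun x : ℝ => 1 - x) 0) = 1 := by norm_num
        rw [e]
        exact Real.hasDerivAt_rpow_const (Or.inl one_ne_zero)
      have h3 := h2.comp (0:ℝ) hd1
      have e2 : L * (1:ℝ) ^ (L - 1) * (-1) = -L := by
        rw [Real.one_rpow]; ring
      rw [e2] at h3
      exact h3
    have hslope : Tendsto (slope (fun x : ℝ => (1 - x) ^ L) 0) (𝓝[≠] 0) (𝓝 (-L)) :=
      hasDerivAt_iff_tendsto_slope.mp hd
    have hinv : Tendsto (fun t : ℝ => 1 / t) atTop (𝓝[≠] (0:ℝ)) := by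
      apply tendsto_nhdsWithin_of_tendsto_nhds_of_eventually_within
      · simpa using tendsto_inv_atTop_zero
      · filter_upwards [eventually_gt_atTop (0:ℝ)] with t ht
        simp [Set.mem_compl_iff]
        positivity
    have hcomp : Tendsto (fun t : ℝ => slope (fun x : ℝ => (1 - x) ^ L) 0 (1 / t))
        atTop (𝓝 (-L)) := hslope.comp hinv
    have hmain : Tendsto (fun t : ℝ => 2 + slope (fun x : ℝ => (1 - x) ^ L) 0 (1 / t))
        atTop (𝓝 (2 - L)) := by
      have := (tendsto_const_nhds : Tendsto (fun _ : ℝ => (2:ℝ)) atTop (𝓝 2)).add hcomp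
      simpa [sub_eq_add_neg] using this
    apply hmain.congr'
    filter_upwards [eventually_gt_atTop (1:ℝ)] with t ht
    have ht0 : (0:ℝ) < t := lt_trans one_pos ht
    rw [key t ht]
    rw [slope_def_field]
    have h10 : (1:ℝ) - (0:ℝ) = 1 := by norm_num
    simp only [sub_zero, h10, Real.one_rpow]
    rw [div_div_eq_mul_div, div_one] at *
    field_simp
    ring
  · intro hL2 t ht
    rw [key t ht, hL2]
    have ht0 : (0:ℝ) < t := lt_trans one_pos ht
    have h1 : (0:ℝ) ≤ 1 - 1/t := by
      have : 1 / t < 1 := by rw [div_lt_one ht0]; exact ht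
      linarith
    have h2 : (1 - 1/t) ^ (2:ℝ) = (1 - 1/t) ^ (2:ℕ) := by
      rw [← Real.rpow_natCast]; norm_num
    have h3 : t ^ (-2:ℝ) = (t ^ (2:ℕ))⁻¹ := by
      rw [← Real.rpow_natCast t 2, ← Real.rpow_neg ht0.le]; norm_num
    rw [h2, h3]
    field_simp
    ring
end
end

section
/- Let G be a d-variate distribution function satisfying conditions (i) and (ii), with exponent function ℓ_Y(t) = −ln G(t), and let U = (U_1,…,U_d) be a random vector whose joint survival function is the inverted multivariate extreme value model P(U_1 > u_1, …, U_d > u_d) = exp(−ℓ_Y((−σ_1/ln(1−u_1))^η, …, (−σ_d/ln(1−u_d))^η)) for (u_1,…,u_d) ∈ (0,1)^d. Then for every t > 1, P(U_1 > 1 − 1/t, …, U_d > 1 − 1/t) = t^{−ℓ_Y(σ_1^η,…,σ_d^η)}; hence the Ledford–Tawn condition P(U_1 > 1 − 1/t, …, U_d > 1 − 1/t) = t^{−1/κ} 𝓛(t) holds with coefficient of asymptotic tail independence κ = 1/ℓ_Y(σ_1^η,…,σ_d^η) and slowly varying function 𝓛 ≡ 1. -/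
open MeasureTheory ProbabilityTheory Real Filter Topology
open scoped ProbabilityTheory

noncomputable section

theorem statement19
    {Ω' : Type*} [MeasureSpace Ω'] [IsProbabilityMeasure (ℙ : Measure Ω')]
    {Ω : Type*} [MeasureSpace Ω] [IsProbabilityMeasure (ℙ : Measure Ω)]
    {d : ℕ} (hd : 0 < d)
    (Y : Fin d → Ω' → ℝ) (hY : ∀ i, Measurable (Y i))
    (σ : Fin d → ℝ) (hσ : ∀ i, 0 < σ i)
    (η : ℝ) (hη0 : 0 < η) (hη1 : η ≤ 1)
    (hmargY : ∀ i, ∀ t : ℝ, 0 < t →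
      ℙ {ω | Y i ω ≤ t} = ENNReal.ofReal (Real.exp (-σ i * t ^ (-1 / η))))
    (hposY : ∀ t : Fin d → ℝ, (∀ i, 0 < t i) → 0 < jointF Y t)
    (hhomY : ∀ c : ℝ, 0 < c → ∀ t : Fin d → ℝ, (∀ i, 0 < t i) →
      expo Y (fun i => c * t i) = c ^ (-1 / η) * expo Y t)
    (U : Fin d → Ω → ℝ) (hU : ∀ i, Measurable (U i))
    (hsurv : ∀ u : Fin d → ℝ, (∀ i, u i ∈ Set.Ioo (0:ℝ) 1) →
      ℙ {ω | ∀ i, u i < U i ω} =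
        ENNReal.ofReal (Real.exp
          (-(expo Y (fun i => (-(σ i) / Real.log (1 - u i)) ^ η))))) :
    (0 < (expo Y (fun i => σ i ^ η))⁻¹ ∧ (expo Y (fun i => σ i ^ η))⁻¹ ≤ 1) ∧
    ∀ t : ℝ, 1 < t →
      (ℙ {ω | ∀ i, 1 - 1 / t < U i ω}).toReal =
        t ^ (-(expo Y (fun i => σ i ^ η))) := by
  have hηne : η ≠ 0 := hη0.ne'
  have htpos : ∀ i, (0:ℝ) < σ i ^ η := fun i => Real.rpow_pos_of_pos (hσ i) η
  have hJpos : 0 < jointF Y (fun i => σ i ^ η) := hposY _ htpos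
  set L := expo Y (fun i => σ i ^ η) with hLdef
  -- L ≥ 1
  have hL1 : 1 ≤ L := by
    set i0 : Fin d := ⟨0, hd⟩
    have hsub : {ω | ∀ i, Y i ω ≤ σ i ^ η} ⊆ {ω | Y i0 ω ≤ σ i0 ^ η} := fun ω h => h i0
    have hexp : -σ i0 * (σ i0 ^ η) ^ (-1/η) = -1 := by
      rw [← Real.rpow_mul (hσ i0).le]
      have : η * (-1/η) = -1 := by field_simp
      rw [this, Real.rpow_neg_one]
      field_simp [(hσ i0).ne']
    have hmono : jointF Y (fun i => σ i ^ η) ≤ Real.exp (-1) := by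
      apply ENNReal.toReal_le_of_le_ofReal (Real.exp_nonneg _)
      calc ℙ {ω | ∀ i, Y i ω ≤ σ i ^ η} ≤ ℙ {ω | Y i0 ω ≤ σ i0 ^ η} := measure_mono hsub
        _ = ENNReal.ofReal (Real.exp (-1)) := by
            rw [hmargY i0 (σ i0 ^ η) (htpos i0), hexp]
    have hlog : Real.log (jointF Y (fun i => σ i ^ η)) ≤ -1 := by
      rw [Real.log_le_iff_le_exp hJpos]; exact hmono
    have : L = -Real.log (jointF Y (fun i => σ i ^ η)) := rfl
    linarith
  have hLpos : 0 < L := lt_of_lt_of_le one_pos hL1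
  constructor
  · exact ⟨inv_pos.mpr hLpos, inv_le_one_of_one_le₀ hL1⟩
  · intro t ht
    have htp : (0:ℝ) < t := lt_trans one_pos ht
    have hlt : 0 < Real.log t := Real.log_pos ht
    have hu : ∀ i : Fin d, (1 - 1/t : ℝ) ∈ Set.Ioo (0:ℝ) 1 := by
      intro i
      constructor
      · have : 1/t < 1 := by rw [div_lt_one htp]; exact ht
        linarith
      · have : 0 < 1/t := by positivity
        linarith
    have key := hsurv (fun _ => 1 - 1/t) hu
    have harg : (fun i => (-(σ i) / Real.log (1 - (1 - 1/t))) ^ η)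
        = fun i => (Real.log t) ^ (-η) * σ i ^ η := by
      funext i
      have h1 : (1:ℝ) - (1 - 1/t) = t⁻¹ := by rw [one_div]; ring
      rw [h1, Real.log_inv]
      have h2 : -(σ i) / -Real.log t = (Real.log t)⁻¹ * σ i := by
        rw [neg_div_neg_eq]; ring
      rw [h2, Real.mul_rpow (inv_nonneg.mpr hlt.le) (hσ i).le,
        Real.inv_rpow hlt.le, ← Real.rpow_neg hlt.le]
    have hc : (0:ℝ) < (Real.log t) ^ (-η) := Real.rpow_pos_of_pos hlt _
    have hhom := hhomY ((Real.log t) ^ (-η)) hc (fun i => σ i ^ η) htpos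
    have hcc : ((Real.log t) ^ (-η)) ^ (-1/η) = Real.log t := by
      rw [← Real.rpow_mul hlt.le]
      have : (-η) * (-1/η) = 1 := by field_simp
      rw [this, Real.rpow_one]
    rw [harg] at key
    rw [hhom, hcc] at key
    rw [key, ENNReal.toReal_ofReal (Real.exp_nonneg _)]
    rw [Real.rpow_def_of_pos htp]
    ring_nf
    rw [hLdef]
end
end
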